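/- arXiv:2210.02125 — 3 statements merged into one kernel-verified Lean document; each statement's English description precedes it below -/
import Mathlib

section
/- Let T ≥ 4 be an integer and let p be a real number with p > 3 − T. Then ∫_0^1 x^p · (1/2)(T−1)(T−2)²(T−3) x^{T−4}(1 − x² + 2x·log x) dx = [(T−1)(T−2)²(T−3)] / [(T+p−1)(T+p−2)²(T+p−3)]. -/
open Real intervalIntegral Set Filter

lemma contOn_log_mul_rpow {b : ℝ} (hb : 0 < b) :
    ContinuousOn (fun x : ℝ => Real.log x * x ^ b) (Icc 0 1) := by
  intro x hx
  rcases eq_or_lt_of_le hx.1 with h | h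
  · subst h
    have hlim : Filter.Tendsto (fun x : ℝ => Real.log x * x ^ b) (nhdsWithin 0 (Ioi 0)) (nhds 0) :=
      tendsto_log_mul_rpow_nhdsGT_zero hb
    unfold ContinuousWithinAt
    have hsub : Icc (0:ℝ) 1 ⊆ insert 0 (Ioi 0) := fun y hy => by
      rcases eq_or_lt_of_le hy.1 with h' | h'
      · exact Or.inl h'.symm
      · exact Or.inr h'
    refine Tendsto.mono_left ?_ (nhdsWithin_mono _ hsub)
    rw [nhdsWithin_insert, tendsto_sup]
    constructor
    · simpa using tendsto_pure_nhds (fun x : ℝ => Real.log x * x ^ b) 0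
    · simpa using hlim
  · exact ((Real.continuousAt_log h.ne').mul
      (Real.continuousAt_rpow_const x b (Or.inl h.ne'))).continuousWithinAt

lemma integral_rpow_mul_log {b : ℝ} (hb : 0 < b) :
    ∫ x in (0:ℝ)..1, x ^ b * Real.log x = -(1 / (b + 1) ^ 2) := by
  have hb1 : (0:ℝ) < b + 1 := by linarith
  set F : ℝ → ℝ := fun x => Real.log x * x ^ (b + 1) / (b + 1) - x ^ (b + 1) / (b + 1) ^ 2 with hF
  have hcontF : ContinuousOn F (Icc 0 1) := by
    apply ContinuousOn.sub
    · exact (contOn_log_mul_rpow hb1).div_const _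
    · exact ((Real.continuous_rpow_const hb1.le).continuousOn).div_const _
  have hderiv : ∀ x ∈ Ioo (0:ℝ) 1, HasDerivAt F (x ^ b * Real.log x) x := by
    intro x hx
    have hx0 : x ≠ 0 := hx.1.ne'
    have h1 : HasDerivAt (fun x : ℝ => x ^ (b + 1)) ((b + 1) * x ^ b) x := by
      have := Real.hasDerivAt_rpow_const (x := x) (p := b + 1) (Or.inl hx0)
      simpa using this
    have h2 : HasDerivAt (fun x : ℝ => Real.log x * x ^ (b + 1))
        (x⁻¹ * x ^ (b + 1) + Real.log x * ((b + 1) * x ^ b)) x :=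
      (Real.hasDerivAt_log hx0).mul h1
    have h3 := (h2.div_const (b + 1)).sub (h1.div_const ((b + 1) ^ 2))
    refine (h3 : HasDerivAt F _ x).congr_deriv ?_
    have hxb : x⁻¹ * x ^ (b + 1) = x ^ b := by
      rw [Real.rpow_add_one hx0]
      field_simp
    rw [hxb]
    field_simp
    ring
  have hint : IntervalIntegrable (fun x : ℝ => x ^ b * Real.log x) MeasureTheory.volume 0 1 := by
    have : ContinuousOn (fun x : ℝ => x ^ b * Real.log x) (Icc 0 1) := by
      have := contOn_log_mul_rpow hb
      exact this.congr (fun x _ => by ring)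
    exact this.intervalIntegrable_of_Icc zero_le_one
  have := intervalIntegral.integral_eq_sub_of_hasDerivAt_of_le zero_le_one hcontF hderiv hint
  rw [this, hF]
  simp only
  rw [Real.zero_rpow hb1.ne', Real.one_rpow, Real.log_one, Real.log_zero]
  ring

theorem moments_pdf_M2
    (T : ℕ) (hT : 4 ≤ T) (p : ℝ) (hp : 3 - (T : ℝ) < p) :
    (∫ x in (0 : ℝ)..1,
        x ^ p * ((1 / 2) * ((T : ℝ) - 1) * ((T : ℝ) - 2) ^ 2 * ((T : ℝ) - 3) * x ^ (T - 4) *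
          (1 - x ^ 2 + 2 * x * Real.log x)))
      = (((T : ℝ) - 1) * ((T : ℝ) - 2) ^ 2 * ((T : ℝ) - 3)) /
          (((T : ℝ) + p - 1) * ((T : ℝ) + p - 2) ^ 2 * ((T : ℝ) + p - 3)) := by
  have hT4 : ((T - 4 : ℕ) : ℝ) = (T : ℝ) - 4 := by
    push_cast [Nat.cast_sub hT]; ring
  set a : ℝ := p + ((T : ℝ) - 4) with ha
  have ha1 : (0:ℝ) < a + 1 := by simp only [ha]; linarith
  have ha2 : (0:ℝ) < a + 2 := by linarith
  have ha3 : (0:ℝ) < a + 3 := by linarith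
  set K : ℝ := ((T : ℝ) - 1) * ((T : ℝ) - 2) ^ 2 * ((T : ℝ) - 3) with hK
  have key : ∀ x ∈ Ioc (0:ℝ) 1,
      x ^ p * ((1 / 2) * ((T : ℝ) - 1) * ((T : ℝ) - 2) ^ 2 * ((T : ℝ) - 3) * x ^ (T - 4) *
          (1 - x ^ 2 + 2 * x * Real.log x))
      = (K / 2) * x ^ a - (K / 2) * x ^ (a + 2) + K * (x ^ (a + 1) * Real.log x) := by
    intro x hx
    have hx0 : (0:ℝ) < x := hx.1
    have hnat : (x : ℝ) ^ (T - 4 : ℕ) = x ^ (((T:ℝ) - 4)) := by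
      rw [← Real.rpow_natCast x (T - 4), hT4]
    have hpow : ∀ c : ℝ, x ^ p * x ^ ((T:ℝ) - 4) * x ^ c = x ^ (a + c) := by
      intro c
      rw [← Real.rpow_add hx0, ← Real.rpow_add hx0, ha]
    have h0 : x ^ a = x ^ p * x ^ ((T:ℝ)-4) := by
      have h := hpow 0
      rw [Real.rpow_zero, mul_one, add_zero] at h
      exact h.symm
    have h1 : x ^ (a + 1) = x ^ p * x ^ ((T:ℝ)-4) * x := by
      rw [← hpow 1, Real.rpow_one]
    have h2 : x ^ (a + 2) = x ^ p * x ^ ((T:ℝ)-4) * x ^ (2:ℕ) := by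
      rw [← hpow 2]
      congr 1
      rw [← Real.rpow_natCast x 2]; norm_num
    rw [hnat, h0, h1, h2]
    ring
  have i1 : IntervalIntegrable (fun x : ℝ => (K/2) * x ^ a) MeasureTheory.volume 0 1 :=
    (intervalIntegral.intervalIntegrable_rpow' (by linarith)).const_mul _
  have i2 : IntervalIntegrable (fun x : ℝ => (K/2) * x ^ (a+2)) MeasureTheory.volume 0 1 :=
    (intervalIntegral.intervalIntegrable_rpow' (by linarith)).const_mul _
  have i3 : IntervalIntegrable (fun x : ℝ => K * (x ^ (a+1) * Real.log x)) MeasureTheory.volume 0 1 := by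
    have hc : ContinuousOn (fun x : ℝ => x ^ (a+1) * Real.log x) (Icc 0 1) :=
      (contOn_log_mul_rpow ha1).congr (fun x _ => by ring)
    exact ((hc.intervalIntegrable_of_Icc zero_le_one)).const_mul _
  have hsplit : (∫ x in (0:ℝ)..1,
        x ^ p * ((1 / 2) * ((T : ℝ) - 1) * ((T : ℝ) - 2) ^ 2 * ((T : ℝ) - 3) * x ^ (T - 4) *
          (1 - x ^ 2 + 2 * x * Real.log x)))
      = ∫ x in (0:ℝ)..1, ((K/2) * x ^ a - (K/2) * x ^ (a+2) + K * (x ^ (a+1) * Real.log x)) := by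
    rw [intervalIntegral.integral_of_le zero_le_one, intervalIntegral.integral_of_le zero_le_one]
    exact MeasureTheory.setIntegral_congr_fun measurableSet_Ioc key
  rw [hsplit, intervalIntegral.integral_add (i1.sub i2) i3, intervalIntegral.integral_sub i1 i2,
    intervalIntegral.integral_const_mul, intervalIntegral.integral_const_mul,
    intervalIntegral.integral_const_mul,
    integral_rpow (Or.inl (by linarith : (-1:ℝ) < a)),
    integral_rpow (Or.inl (by linarith : (-1:ℝ) < a + 2)),
    integral_rpow_mul_log ha1]
  rw [Real.one_rpow, Real.zero_rpow (by linarith : a + 1 ≠ 0),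
    Real.zero_rpow (by linarith : a + 2 + 1 ≠ 0)]
  have e1 : (T:ℝ) + p - 1 = a + 3 := by rw [ha]; ring
  have e2 : (T:ℝ) + p - 2 = a + 2 := by rw [ha]; ring
  have e3 : (T:ℝ) + p - 3 = a + 1 := by rw [ha]; ring
  rw [e1, e2, e3]
  have h23 : a + 2 + 1 = a + 3 := by ring
  rw [h23]
  simp only [Real.one_rpow]
  field_simp
  ring
end

section
/- (Gilbert–Varshamov lower bound) Let T and M be positive integers with T ≥ 2M and let δ ∈ (0,1). Let μ be the Haar probability measure on U(T) and set c = μ{U ∈ U(T) : det(I_M − E^H U E E^H U^H E) ≤ δ}. If c > 0, then there exist an integer K with K ≥ 1/c and matrices X_1, …, X_K ∈ ℂ^{T×M} with X_i^H X_i = I_M for all i, such that det(I_M − X_i^H X_j X_j^H X_i) ≥ δ for all i ≠ j. -/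
open Matrix MeasureTheory Pointwise

set_option synthInstance.maxHeartbeats 1000000
set_option maxHeartbeats 1600000

noncomputable instance {m n : ℕ} : MeasureSpace (Matrix (Fin m) (Fin n) ℂ) := by
  unfold Matrix; infer_instance

/-- The `T × M` matrix whose columns are the first `M` standard basis vectors of `ℂ^T`. -/
def stdFrame (T M : ℕ) : Matrix (Fin T) (Fin M) ℂ :=
  Matrix.of fun i j => if (i : ℕ) = (j : ℕ) then 1 else 0

instance {T : ℕ} : MeasurableMul (Matrix.unitaryGroup (Fin T) ℂ) := by
  constructor
  · intro g
    apply Measurable.subtype_mk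
    have : Measurable fun m : Matrix (Fin T) (Fin T) ℂ => (g : Matrix (Fin T) (Fin T) ℂ) * m := by
      apply measurable_pi_lambda; intro i
      apply measurable_pi_lambda; intro j
      simp only [Matrix.mul_apply]
      exact Finset.measurable_sum _ fun k _ =>
        (measurable_const.mul ((measurable_pi_apply j).comp (measurable_pi_apply k)))
    exact this.comp measurable_subtype_coe
  · intro g
    apply Measurable.subtype_mk
    have : Measurable fun m : Matrix (Fin T) (Fin T) ℂ => m * (g : Matrix (Fin T) (Fin T) ℂ) := by
      apply measurable_pi_lambda; intro i
      apply measurable_pi_lambda; intro j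
      simp only [Matrix.mul_apply]
      exact Finset.measurable_sum _ fun k _ =>
        (Measurable.mul (f := fun c : Matrix (Fin T) (Fin T) ℂ => c i k)
          (g := fun _ => (g : Matrix (Fin T) (Fin T) ℂ) k j)
          ((measurable_pi_apply k).comp (measurable_pi_apply i)) measurable_const)
    exact this.comp measurable_subtype_coe

lemma stdFrame_orthonormal (T M : ℕ) (hME : M ≤ T) :
    (stdFrame T M)ᴴ * stdFrame T M = 1 := by
  ext i j
  simp only [Matrix.mul_apply, Matrix.conjTranspose_apply, stdFrame, Matrix.of_apply]
  rw [Finset.sum_eq_single (⟨(i : ℕ), lt_of_lt_of_le i.2 hME⟩ : Fin T)]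
  · simp [Matrix.one_apply, Fin.ext_iff, eq_comm]
  · intro k _ hk
    have : (k : ℕ) ≠ (i : ℕ) := fun h => hk (Fin.ext h)
    simp [this]
  · intro h; exact absurd (Finset.mem_univ _) h

lemma det_one_sub_mul_conjTranspose_comm {M : ℕ} (A : Matrix (Fin M) (Fin M) ℂ) :
    (1 - A * Aᴴ).det = (1 - Aᴴ * A).det := by
  have := Matrix.det_mul_add_one_comm A (-Aᴴ)
  rw [mul_neg] at this
  rw [sub_eq_add_neg, sub_eq_add_neg, add_comm, this, neg_mul, add_comm]

theorem gilbert_varshamov_chordal_product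
    (T M : ℕ) (hT : 0 < T) (hM : 0 < M) (hTM : 2 * M ≤ T)
    (δ : ℝ) (hδ0 : 0 < δ) (hδ1 : δ < 1)
    (μ : Measure (Matrix.unitaryGroup (Fin T) ℂ))
    [IsProbabilityMeasure μ] [μ.IsMulLeftInvariant]
    (hc : 0 < μ {U : Matrix.unitaryGroup (Fin T) ℂ |
        ((1 - (stdFrame T M)ᴴ * (U : Matrix (Fin T) (Fin T) ℂ) * stdFrame T M *
            (stdFrame T M)ᴴ * (U : Matrix (Fin T) (Fin T) ℂ)ᴴ * stdFrame T M).det).re ≤ δ}) :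
    ∃ K : ℕ,
      (μ {U : Matrix.unitaryGroup (Fin T) ℂ |
        ((1 - (stdFrame T M)ᴴ * (U : Matrix (Fin T) (Fin T) ℂ) * stdFrame T M *
            (stdFrame T M)ᴴ * (U : Matrix (Fin T) (Fin T) ℂ)ᴴ * stdFrame T M).det).re ≤ δ})⁻¹
        ≤ (K : ENNReal) ∧
      ∃ X : Fin K → Matrix (Fin T) (Fin M) ℂ,
        (∀ i, (X i)ᴴ * X i = 1) ∧
        ∀ i j, i ≠ j → δ ≤ ((1 - (X i)ᴴ * X j * (X j)ᴴ * X i).det).re := by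
  classical
  set E : Matrix (Fin T) (Fin M) ℂ := stdFrame T M with hE
  set S : Set (Matrix.unitaryGroup (Fin T) ℂ) := {U : Matrix.unitaryGroup (Fin T) ℂ |
        ((1 - Eᴴ * (U : Matrix (Fin T) (Fin T) ℂ) * E *
            Eᴴ * (U : Matrix (Fin T) (Fin T) ℂ)ᴴ * E).det).re ≤ δ} with hS
  have hME : M ≤ T := by omega
  have hEE : Eᴴ * E = 1 := stdFrame_orthonormal T M hME
  -- the chordal quantity
  set f : Matrix.unitaryGroup (Fin T) ℂ → Matrix.unitaryGroup (Fin T) ℂ → ℝ := fun U V =>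
    ((1 - ((U : Matrix (Fin T) (Fin T) ℂ) * E)ᴴ * ((V : Matrix (Fin T) (Fin T) ℂ) * E) *
        ((V : Matrix (Fin T) (Fin T) ℂ) * E)ᴴ * ((U : Matrix (Fin T) (Fin T) ℂ) * E)).det).re
    with hf
  -- membership in translated set
  have hmem : ∀ U V : Matrix.unitaryGroup (Fin T) ℂ, V ∈ U • S ↔ f U V ≤ δ := by
    intro U V
    rw [Set.mem_smul_set_iff_inv_smul_mem]
    have hcoe : ((U⁻¹ * V : Matrix.unitaryGroup (Fin T) ℂ) : Matrix (Fin T) (Fin T) ℂ)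
        = (U : Matrix (Fin T) (Fin T) ℂ)ᴴ * (V : Matrix (Fin T) (Fin T) ℂ) := by
      have h0 : ((U⁻¹ * V : Matrix.unitaryGroup (Fin T) ℂ) : Matrix (Fin T) (Fin T) ℂ)
          = ((U⁻¹ : Matrix.unitaryGroup (Fin T) ℂ) : Matrix (Fin T) (Fin T) ℂ)
            * (V : Matrix (Fin T) (Fin T) ℂ) := rfl
      rw [h0, Matrix.UnitaryGroup.inv_val, Matrix.star_eq_conjTranspose]
    have key : Eᴴ * ((U : Matrix (Fin T) (Fin T) ℂ)ᴴ * (V : Matrix (Fin T) (Fin T) ℂ)) * E * Eᴴ *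
          ((U : Matrix (Fin T) (Fin T) ℂ)ᴴ * (V : Matrix (Fin T) (Fin T) ℂ))ᴴ * E
        = ((U : Matrix (Fin T) (Fin T) ℂ) * E)ᴴ * ((V : Matrix (Fin T) (Fin T) ℂ) * E) *
          ((V : Matrix (Fin T) (Fin T) ℂ) * E)ᴴ * ((U : Matrix (Fin T) (Fin T) ℂ) * E) := by
      simp [Matrix.conjTranspose_mul, Matrix.mul_assoc]
    simp only [smul_eq_mul, hS, Set.mem_setOf_eq, hcoe, hf, key]
  -- symmetry of f
  have hsymm : ∀ U V : Matrix.unitaryGroup (Fin T) ℂ, f U V = f V U := by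
    intro U V
    set A := ((U : Matrix (Fin T) (Fin T) ℂ) * E)ᴴ * ((V : Matrix (Fin T) (Fin T) ℂ) * E)
      with hA
    have h1 : (1 : Matrix (Fin M) (Fin M) ℂ)
        - ((U : Matrix (Fin T) (Fin T) ℂ) * E)ᴴ * ((V : Matrix (Fin T) (Fin T) ℂ) * E) *
          ((V : Matrix (Fin T) (Fin T) ℂ) * E)ᴴ * ((U : Matrix (Fin T) (Fin T) ℂ) * E)
        = 1 - A * Aᴴ := by
      simp [hA, Matrix.conjTranspose_mul, Matrix.mul_assoc]
    have h2 : (1 : Matrix (Fin M) (Fin M) ℂ)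
        - ((V : Matrix (Fin T) (Fin T) ℂ) * E)ᴴ * ((U : Matrix (Fin T) (Fin T) ℂ) * E) *
          ((U : Matrix (Fin T) (Fin T) ℂ) * E)ᴴ * ((V : Matrix (Fin T) (Fin T) ℂ) * E)
        = 1 - Aᴴ * A := by
      simp [hA, Matrix.conjTranspose_mul, Matrix.mul_assoc]
    simp only [hf, h1, h2, det_one_sub_mul_conjTranspose_comm]
  -- measure of each ball
  have hball : ∀ U : Matrix.unitaryGroup (Fin T) ℂ, μ (U • S) = μ S := by
    intro U
    have : U • S = (fun x : Matrix.unitaryGroup (Fin T) ℂ => U⁻¹ * x) ⁻¹' S := by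
      ext x
      rw [Set.mem_preimage, Set.mem_smul_set_iff_inv_smul_mem, smul_eq_mul]
    rw [this, measure_preimage_mul]
  -- frames are orthonormal
  have hframe : ∀ U : Matrix.unitaryGroup (Fin T) ℂ, ((U : Matrix (Fin T) (Fin T) ℂ) * E)ᴴ *
      ((U : Matrix (Fin T) (Fin T) ℂ) * E) = 1 := by
    intro U
    have hU : (U : Matrix (Fin T) (Fin T) ℂ)ᴴ * (U : Matrix (Fin T) (Fin T) ℂ) = 1 := by
      rw [← Matrix.star_eq_conjTranspose]
      exact Matrix.UnitaryGroup.star_mul_self U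
    calc ((U : Matrix (Fin T) (Fin T) ℂ) * E)ᴴ * ((U : Matrix (Fin T) (Fin T) ℂ) * E)
        = Eᴴ * (((U : Matrix (Fin T) (Fin T) ℂ))ᴴ * (U : Matrix (Fin T) (Fin T) ℂ)) * E := by
          rw [Matrix.conjTranspose_mul, Matrix.mul_assoc, Matrix.mul_assoc, Matrix.mul_assoc]
      _ = 1 := by rw [hU, Matrix.mul_one, hEE]
  -- reduce goal
  suffices h : ∃ K : ℕ, (μ S)⁻¹ ≤ (K : ENNReal) ∧
      ∃ U : Fin K → Matrix.unitaryGroup (Fin T) ℂ, ∀ i j, i ≠ j → δ ≤ f (U i) (U j) by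
    obtain ⟨K, hK, U, hU⟩ := h
    exact ⟨K, hK, fun i => (U i : Matrix (Fin T) (Fin T) ℂ) * E,
      fun i => hframe (U i), hU⟩
  by_cases hcov : ∃ n : ℕ, ∃ U : Fin n → Matrix.unitaryGroup (Fin T) ℂ,
      (∀ i j, i ≠ j → δ < f (U i) (U j)) ∧ Set.univ ⊆ ⋃ i, U i • S
  · obtain ⟨n, U, hU, hCov⟩ := hcov
    have h1 : (1 : ENNReal) ≤ n * μ S := by
      calc (1 : ENNReal) = μ Set.univ := (measure_univ).symm
        _ ≤ μ (⋃ i, U i • S) := measure_mono hCov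
        _ ≤ ∑ i : Fin n, μ (U i • S) := measure_iUnion_fintype_le μ _
        _ = n * μ S := by simp [hball, Finset.sum_const, nsmul_eq_mul]
    refine ⟨n, ?_, U, fun i j hij => (hU i j hij).le⟩
    rw [ENNReal.inv_le_iff_le_mul]
    · rwa [mul_comm]
    · intro _; exact hc.ne'
    · intro hStop
      exact absurd (hStop ▸ (measure_mono (Set.subset_univ S)).trans_eq measure_univ)
        (by simp)
  · push_neg at hcov
    have hfam : ∀ n : ℕ, ∃ U : Fin n → Matrix.unitaryGroup (Fin T) ℂ, ∀ i j, i ≠ j → δ < f (U i) (U j) := by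
      intro n
      induction n with
      | zero => exact ⟨fun i => i.elim0, fun i => i.elim0⟩
      | succ n ih =>
        obtain ⟨U, hU⟩ := ih
        obtain ⟨V, hV, hVnot⟩ := Set.not_subset.mp (hcov n U hU)
        have hfar : ∀ i, δ < f (U i) V := by
          intro i
          by_contra h
          exact hVnot (Set.mem_iUnion.mpr ⟨i, (hmem (U i) V).mpr (not_lt.mp h)⟩)
        refine ⟨Fin.snoc U V, fun i j hij => ?_⟩
        rcases Fin.eq_castSucc_or_eq_last i with ⟨i', rfl⟩ | rfl <;>
          rcases Fin.eq_castSucc_or_eq_last j with ⟨j', rfl⟩ | rfl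
        · have : i' ≠ j' := fun h => hij (by rw [h])
          simpa [Fin.snoc_castSucc] using hU i' j' this
        · simpa [Fin.snoc_castSucc, Fin.snoc_last] using hfar i'
        · rw [Fin.snoc_last, Fin.snoc_castSucc, hsymm]
          exact hfar j'
        · exact absurd rfl hij
    have hfin : (μ S)⁻¹ ≠ ⊤ := ENNReal.inv_ne_top.mpr hc.ne'
    obtain ⟨N, hN⟩ := ENNReal.exists_nat_gt hfin.lt_top.ne
    obtain ⟨U, hU⟩ := hfam N
    exact ⟨N, hN.le, U, fun i j hij => (hU i j hij).le⟩
end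

section
/- Let T ≥ 2 be an integer and let δ ∈ (0,1). Then there exist an integer K with K ≥ δ^{−(T−1)} and unit vectors x_1, …, x_K ∈ ℂ^T such that 1 − |⟨x_i, x_j⟩|² ≥ δ for all i ≠ j; equivalently, |⟨x_i, x_j⟩|² ≤ 1 − δ for all i ≠ j. -/
open MeasureTheory Metric Set ENNReal

lemma vol_sq_lt (r : ℝ) : volume {z : ℂ | ‖z‖^2 < r} = ENNReal.ofReal (Real.pi * r) := by
  rcases le_or_gt r 0 with h | h
  · have : {z : ℂ | ‖z‖^2 < r} = ∅ := by
      ext z; simp only [mem_setOf_eq, mem_empty_iff_false, iff_false, not_lt]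
      exact h.trans (by positivity)
    rw [this, measure_empty, eq_comm, ENNReal.ofReal_eq_zero]
    exact mul_nonpos_of_nonneg_of_nonpos Real.pi_pos.le h
  · have : {z : ℂ | ‖z‖^2 < r} = ball (0:ℂ) (Real.sqrt r) := by
      ext z
      simp only [mem_setOf_eq, mem_ball, dist_zero_right]
      rw [show ‖z‖^2 < r ↔ ‖z‖ < Real.sqrt r from
        ((Real.lt_sqrt (norm_nonneg z)).symm)]
    rw [this, Complex.volume_ball]
    rw [← ENNReal.ofReal_pow (Real.sqrt_nonneg r), Real.sq_sqrt h.le]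
    rw [← ENNReal.ofReal_coe_nnreal, NNReal.coe_real_pi, mul_comm, ← ENNReal.ofReal_mul Real.pi_pos.le]

lemma vol_sq_le (r : ℝ) : volume {z : ℂ | ‖z‖^2 ≤ r} = ENNReal.ofReal (Real.pi * r) := by
  rcases lt_or_ge r 0 with h | h
  · have : {z : ℂ | ‖z‖^2 ≤ r} = ∅ := by
      ext z; simp only [mem_setOf_eq, mem_empty_iff_false, iff_false, not_le]
      exact h.trans_le (by positivity)
    rw [this, measure_empty, eq_comm, ENNReal.ofReal_eq_zero]
    exact mul_nonpos_of_nonneg_of_nonpos Real.pi_pos.le h.le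
  · have : {z : ℂ | ‖z‖^2 ≤ r} = closedBall (0:ℂ) (Real.sqrt r) := by
      ext z
      simp only [mem_setOf_eq, mem_closedBall, dist_zero_right]
      rw [show ‖z‖^2 ≤ r ↔ ‖z‖ ≤ Real.sqrt r from (Real.le_sqrt (norm_nonneg z) h).symm]
    rw [this, Complex.volume_closedBall]
    rw [← ENNReal.ofReal_pow (Real.sqrt_nonneg r), Real.sq_sqrt h]
    rw [← ENNReal.ofReal_coe_nnreal, NNReal.coe_real_pi, mul_comm, ← ENNReal.ofReal_mul Real.pi_pos.le]

lemma vol_annulus (r₁ r₂ : ℝ) (h1 : 0 ≤ r₁) :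
    volume {z : ℂ | r₁ < ‖z‖^2 ∧ ‖z‖^2 ≤ r₂} = ENNReal.ofReal (Real.pi * (r₂ - r₁)) := by
  rcases le_or_gt r₂ r₁ with h | h
  · have : {z : ℂ | r₁ < ‖z‖^2 ∧ ‖z‖^2 ≤ r₂} = ∅ := by
      ext z; simp only [mem_setOf_eq, mem_empty_iff_false, iff_false, not_and, not_le]
      intro hz; exact lt_of_le_of_lt h hz
    rw [this, measure_empty, eq_comm, ENNReal.ofReal_eq_zero]
    exact mul_nonpos_of_nonneg_of_nonpos Real.pi_pos.le (by linarith)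
  · have hset : {z : ℂ | r₁ < ‖z‖^2 ∧ ‖z‖^2 ≤ r₂}
        = {z : ℂ | ‖z‖^2 ≤ r₂} \ {z : ℂ | ‖z‖^2 ≤ r₁} := by
      ext z; simp only [mem_setOf_eq, mem_diff, not_le]; tauto
    have hm1 : MeasurableSet {z : ℂ | ‖z‖^2 ≤ r₁} :=
      measurableSet_le (by fun_prop) measurable_const
    have hsub : {z : ℂ | ‖z‖^2 ≤ r₁} ⊆ {z : ℂ | ‖z‖^2 ≤ r₂} := by
      intro z hz; exact le_trans hz h.le
    rw [hset, measure_diff hsub hm1.nullMeasurableSet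
      (by rw [vol_sq_le]; exact ENNReal.ofReal_ne_top), vol_sq_le, vol_sq_le,
      ← ENNReal.ofReal_sub _ (by positivity)]
    ring_nf

lemma scale_lint (n : ℕ) (δ : ℝ) (hδ0 : 0 < δ) :
    ∫⁻ v : EuclideanSpace ℝ (Fin (2*n)), ENNReal.ofReal (1 - ‖v‖^2/δ)
      = ENNReal.ofReal (δ^n) *
        ∫⁻ v : EuclideanSpace ℝ (Fin (2*n)), ENNReal.ofReal (1 - ‖v‖^2) := by
  set G := EuclideanSpace ℝ (Fin (2*n))
  set r : ℝ := (Real.sqrt δ)⁻¹ with hr_def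
  have hsδ : 0 < Real.sqrt δ := Real.sqrt_pos.mpr hδ0
  have hr : r ≠ 0 := by positivity
  have hF : Measurable (fun v : G => ENNReal.ofReal (1 - ‖v‖^2)) := by fun_prop
  have hmap := Measure.map_addHaar_smul (volume : Measure G) hr
  have hdim : Module.finrank ℝ G = 2*n := finrank_euclideanSpace_fin
  have key : ∫⁻ v : G, ENNReal.ofReal (1 - ‖r • v‖^2)
      = ENNReal.ofReal (δ^n) * ∫⁻ v : G, ENNReal.ofReal (1 - ‖v‖^2) := by
    rw [← lintegral_map hF (measurable_const_smul r), hmap, lintegral_smul_measure]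
    congr 1
    rw [hdim, hr_def]
    rw [abs_of_nonneg (by positivity)]
    rw [← inv_pow, inv_inv, pow_mul, Real.sq_sqrt hδ0.le]
  have : ∀ v : G, ‖r • v‖^2 = ‖v‖^2/δ := by
    intro v
    rw [norm_smul, mul_pow, Real.norm_eq_abs, abs_of_nonneg (by positivity), hr_def,
      inv_pow, Real.sq_sqrt hδ0.le]
    ring
  simp_rw [← this]
  exact key

lemma cone_vol (n : ℕ) (δ : ℝ) (hδ0 : 0 < δ) (hδ1 : δ < 1) :
    volume {v : EuclideanSpace ℝ (Fin (2*n) ⊕ Fin 2) |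
        ‖v‖ ≤ 1 ∧ (1-δ)*‖v‖^2 < (v (Sum.inr 0))^2 + (v (Sum.inr 1))^2}
      = ENNReal.ofReal (δ^n) * volume (ball (0 : EuclideanSpace ℝ (Fin (2*n) ⊕ Fin 2)) 1) := by
  set ι := (Fin (2*n) ⊕ Fin 2) with hι
  have hnorm : ∀ v : EuclideanSpace ℝ ι, ‖v‖^2 = ∑ k, (v k)^2 := by
    intro v
    rw [EuclideanSpace.norm_eq, Real.sq_sqrt (by positivity)]
    simp [sq_abs]
  -- sets on the pi type
  set Api : Set (ι → ℝ) := {u | (∑ k, (u k)^2) ≤ 1 ∧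
      (1-δ)*(∑ k, (u k)^2) < (u (Sum.inr 0))^2 + (u (Sum.inr 1))^2} with hApi
  set Bpi : Set (ι → ℝ) := {u | (∑ k, (u k)^2) < 1} with hBpi
  have hmsum : Measurable (fun u : ι → ℝ => ∑ k, (u k)^2) :=
    Finset.univ.measurable_sum fun k _ => (measurable_pi_apply k).pow_const 2
  have hmq : Measurable (fun u : ι → ℝ => (u (Sum.inr 0))^2 + (u (Sum.inr 1))^2) :=
    ((measurable_pi_apply _).pow_const 2).add ((measurable_pi_apply _).pow_const 2)
  have hmApi : MeasurableSet Api := by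
    apply MeasurableSet.inter
    · exact measurableSet_le hmsum measurable_const
    · exact measurableSet_lt (hmsum.const_mul _) hmq
  have hmBpi : MeasurableSet Bpi := measurableSet_lt hmsum measurable_const
  have ψ := EuclideanSpace.volume_preserving_symm_measurableEquiv_toLp ι
  have hA1 : volume {v : EuclideanSpace ℝ ι |
        ‖v‖ ≤ 1 ∧ (1-δ)*‖v‖^2 < (v (Sum.inr 0))^2 + (v (Sum.inr 1))^2} = volume Api := by
    rw [show {v : EuclideanSpace ℝ ι |
        ‖v‖ ≤ 1 ∧ (1-δ)*‖v‖^2 < (v (Sum.inr 0))^2 + (v (Sum.inr 1))^2}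
        = (MeasurableEquiv.toLp 2 (ι → ℝ)).symm ⁻¹' Api from ?_]
    · exact ψ.measure_preimage hmApi.nullMeasurableSet
    · ext v
      have h1 : ‖v‖ ≤ 1 ↔ ‖v‖^2 ≤ 1 := by
        constructor
        · intro h; nlinarith [norm_nonneg v]
        · intro h; nlinarith [norm_nonneg v]
      simp only [mem_preimage, hApi, mem_setOf_eq, mem_setOf_eq]
      simp only [show ∀ k, (MeasurableEquiv.toLp 2 (ι → ℝ)).symm v k = v k from fun k => rfl]
      rw [← hnorm v, h1]
  have hB1 : volume (ball (0 : EuclideanSpace ℝ ι) 1) = volume Bpi := by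
    rw [show ball (0 : EuclideanSpace ℝ ι) 1 = (MeasurableEquiv.toLp 2 (ι → ℝ)).symm ⁻¹' Bpi from ?_]
    · exact ψ.measure_preimage hmBpi.nullMeasurableSet
    · ext v
      simp only [mem_ball, dist_zero_right, mem_preimage, hBpi, mem_setOf_eq]
      simp only [show ∀ k, (MeasurableEquiv.toLp 2 (ι → ℝ)).symm v k = v k from fun k => rfl]
      rw [← hnorm v]
      constructor
      · intro h; nlinarith [norm_nonneg v]
      · intro h; nlinarith [norm_nonneg v]
  -- split into product
  set e := (MeasurableEquiv.sumPiEquivProdPi (fun _ : ι => ℝ)).symm with he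
  have hep := volume_measurePreserving_sumPiEquivProdPi_symm (fun _ : ι => ℝ)
  set Q : (Fin (2*n) → ℝ) → ℝ := fun w => ∑ j, (w j)^2 with hQ
  set Aprod : Set ((Fin (2*n) → ℝ) × (Fin 2 → ℝ)) :=
    {p | Q p.1 + ((p.2 0)^2 + (p.2 1)^2) ≤ 1 ∧
      (1-δ)*(Q p.1 + ((p.2 0)^2 + (p.2 1)^2)) < (p.2 0)^2 + (p.2 1)^2} with hAprod
  set Bprod : Set ((Fin (2*n) → ℝ) × (Fin 2 → ℝ)) :=
    {p | Q p.1 + ((p.2 0)^2 + (p.2 1)^2) < 1} with hBprod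
  have hsum : ∀ p : (Fin (2*n) → ℝ) × (Fin 2 → ℝ),
      (∑ k, (e p k)^2) = Q p.1 + ((p.2 0)^2 + (p.2 1)^2) := by
    intro p
    simp only [show ∀ k, e p k = Sum.elim p.1 p.2 k from fun k => rfl]
    rw [Fintype.sum_sum_type]
    simp [Fin.sum_univ_two, hQ]
  have heA : e ⁻¹' Api = Aprod := by
    ext p
    simp only [mem_preimage, hApi, hAprod, mem_setOf_eq, hsum p]
    show (∑ k, (e p k)^2) ≤ 1 ∧ (1-δ)*(∑ k, (e p k)^2) < (e p (Sum.inr 0))^2 + (e p (Sum.inr 1))^2 ↔ _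
    rw [hsum p]
    rfl
  have heB : e ⁻¹' Bpi = Bprod := by
    ext p
    simp only [mem_preimage, hBpi, hBprod, mem_setOf_eq, hsum p]
    show (∑ k, (e p k)^2) < 1 ↔ _
    rw [hsum p]
  have hA2 : volume Api = volume Aprod := by
    rw [← heA]; exact (hep.measure_preimage hmApi.nullMeasurableSet).symm
  have hB2 : volume Bpi = volume Bprod := by
    rw [← heB]; exact (hep.measure_preimage hmBpi.nullMeasurableSet).symm
  -- Fubini
  have hQm : Measurable Q :=
    Finset.univ.measurable_sum fun j _ => (measurable_pi_apply j).pow_const 2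
  have hQnn : ∀ w, 0 ≤ Q w := fun w => Finset.sum_nonneg fun j _ => sq_nonneg _
  have hmq2 : Measurable (fun a : Fin 2 → ℝ => (a 0)^2 + (a 1)^2) :=
    ((measurable_pi_apply _).pow_const 2).add ((measurable_pi_apply _).pow_const 2)
  have hmAprod : MeasurableSet Aprod := by
    apply MeasurableSet.inter
    · exact measurableSet_le ((hQm.comp measurable_fst).add (hmq2.comp measurable_snd))
        measurable_const
    · exact measurableSet_lt
        (((hQm.comp measurable_fst).add (hmq2.comp measurable_snd)).const_mul _)
        (hmq2.comp measurable_snd)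
  have hmBprod : MeasurableSet Bprod :=
    measurableSet_lt ((hQm.comp measurable_fst).add (hmq2.comp measurable_snd)) measurable_const
  have hzsq : ∀ z : ℂ,
      (Complex.measurableEquivPi z 0)^2 + (Complex.measurableEquivPi z 1)^2 = ‖z‖^2 := by
    intro z
    simp only [Complex.measurableEquivPi_apply, Matrix.cons_val_zero, Matrix.cons_val_one,
      Matrix.head_cons, Complex.sq_norm, Complex.normSq_apply]
    ring
  have keyA : ∀ w, volume (Prod.mk w ⁻¹' Aprod) = ENNReal.ofReal (Real.pi * (1 - Q w / δ)) := by
    intro w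
    have hms : MeasurableSet (Prod.mk w ⁻¹' Aprod) := hmAprod.preimage measurable_prodMk_left
    have hpre : Complex.measurableEquivPi ⁻¹' (Prod.mk w ⁻¹' Aprod)
        = {z : ℂ | (1-δ)*Q w/δ < ‖z‖^2 ∧ ‖z‖^2 ≤ 1 - Q w} := by
      ext z
      simp only [mem_preimage, hAprod, mem_setOf_eq, hzsq z]
      constructor
      · rintro ⟨h1, h2⟩
        refine ⟨?_, by linarith⟩
        rw [div_lt_iff₀ hδ0]; nlinarith
      · rintro ⟨h1, h2⟩
        rw [div_lt_iff₀ hδ0] at h1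
        exact ⟨by linarith, by nlinarith⟩
    rw [← (Complex.volume_preserving_equiv_pi).measure_preimage hms.nullMeasurableSet, hpre,
      vol_annulus _ _ (div_nonneg (mul_nonneg (by linarith) (hQnn w)) hδ0.le)]
    have harith : (1 - Q w) - (1-δ)*Q w/δ = 1 - Q w/δ := by field_simp; ring
    rw [harith]
  have keyB : ∀ w, volume (Prod.mk w ⁻¹' Bprod) = ENNReal.ofReal (Real.pi * (1 - Q w)) := by
    intro w
    have hms : MeasurableSet (Prod.mk w ⁻¹' Bprod) := hmBprod.preimage measurable_prodMk_left
    have hpre : Complex.measurableEquivPi ⁻¹' (Prod.mk w ⁻¹' Bprod)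
        = {z : ℂ | ‖z‖^2 < 1 - Q w} := by
      ext z
      simp only [mem_preimage, hBprod, mem_setOf_eq, hzsq z]
      constructor
      · intro h; linarith
      · intro h; linarith
    rw [← (Complex.volume_preserving_equiv_pi).measure_preimage hms.nullMeasurableSet, hpre,
      vol_sq_lt]
  have hAf : volume Aprod = ∫⁻ w, ENNReal.ofReal (Real.pi * (1 - Q w / δ)) := by
    rw [Measure.volume_eq_prod, Measure.prod_apply hmAprod]
    exact lintegral_congr keyA
  have hBf : volume Bprod = ∫⁻ w, ENNReal.ofReal (Real.pi * (1 - Q w)) := by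
    rw [Measure.volume_eq_prod, Measure.prod_apply hmBprod]
    exact lintegral_congr keyB
  -- pull out π and transport to EuclideanSpace ℝ (Fin (2n))
  have hπ : ∀ a : ℝ, ENNReal.ofReal (Real.pi * a) = ENNReal.ofReal Real.pi * ENNReal.ofReal a :=
    fun a => ENNReal.ofReal_mul Real.pi_pos.le
  have hGnorm : ∀ v : EuclideanSpace ℝ (Fin (2*n)), Q (fun j => v j) = ‖v‖^2 := by
    intro v
    rw [EuclideanSpace.norm_eq, Real.sq_sqrt (by positivity), hQ]
    simp [sq_abs]
  have ψG := EuclideanSpace.volume_preserving_symm_measurableEquiv_toLp (Fin (2*n))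
  have hcompA : ∫⁻ w : Fin (2*n) → ℝ, ENNReal.ofReal (1 - Q w/δ)
      = ∫⁻ v : EuclideanSpace ℝ (Fin (2*n)), ENNReal.ofReal (1 - ‖v‖^2/δ) := by
    rw [← ψG.lintegral_comp (f := fun w => ENNReal.ofReal (1 - Q w/δ)) ((measurable_const.sub (hQm.div_const δ)).ennreal_ofReal)]
    apply lintegral_congr
    intro v
    congr 1
    rw [show Q (fun j => (MeasurableEquiv.toLp 2 (Fin (2*n) → ℝ)).symm v j) = Q (fun j => v j)
      from rfl, hGnorm v]
  have hcompB : ∫⁻ w : Fin (2*n) → ℝ, ENNReal.ofReal (1 - Q w)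
      = ∫⁻ v : EuclideanSpace ℝ (Fin (2*n)), ENNReal.ofReal (1 - ‖v‖^2) := by
    rw [← ψG.lintegral_comp (f := fun w => ENNReal.ofReal (1 - Q w)) ((measurable_const.sub hQm).ennreal_ofReal)]
    apply lintegral_congr
    intro v
    congr 1
    rw [show Q (fun j => (MeasurableEquiv.toLp 2 (Fin (2*n) → ℝ)).symm v j) = Q (fun j => v j)
      from rfl, hGnorm v]
  calc volume {v : EuclideanSpace ℝ ι |
        ‖v‖ ≤ 1 ∧ (1-δ)*‖v‖^2 < (v (Sum.inr 0))^2 + (v (Sum.inr 1))^2}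
      = ∫⁻ w, ENNReal.ofReal (Real.pi * (1 - Q w / δ)) := by rw [hA1, hA2, hAf]
    _ = ENNReal.ofReal Real.pi * ∫⁻ w, ENNReal.ofReal (1 - Q w / δ) := by
        simp_rw [hπ]
        exact lintegral_const_mul _ ((measurable_const.sub (hQm.div_const δ)).ennreal_ofReal)
    _ = ENNReal.ofReal Real.pi * (ENNReal.ofReal (δ^n) *
          ∫⁻ v : EuclideanSpace ℝ (Fin (2*n)), ENNReal.ofReal (1 - ‖v‖^2)) := by
        rw [hcompA, scale_lint n δ hδ0]
    _ = ENNReal.ofReal (δ^n) * (ENNReal.ofReal Real.pi *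
          ∫⁻ w, ENNReal.ofReal (1 - Q w)) := by rw [hcompB]; ring
    _ = ENNReal.ofReal (δ^n) * volume (ball (0 : EuclideanSpace ℝ ι) 1) := by
        rw [hB1, hB2, hBf]
        congr 1
        simp_rw [hπ]
        exact (lintegral_const_mul _ ((measurable_const.sub hQm).ennreal_ofReal)).symm

lemma euclid_real_inner {ι : Type*} [Fintype ι] (x y : EuclideanSpace ℂ ι) :
    (inner ℝ x y : ℝ) = (inner ℂ x y : ℂ).re := by
  rw [PiLp.inner_apply, PiLp.inner_apply, Complex.re_sum]
  apply Finset.sum_congr rfl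
  intro i _
  rw [Complex.inner, RCLike.inner_apply]

lemma exists_good_basis (n : ℕ) (x : EuclideanSpace ℂ (Fin (n+1))) (hx : ‖x‖ = 1) :
    ∃ b : OrthonormalBasis (Fin (2*n) ⊕ Fin 2) ℝ (EuclideanSpace ℂ (Fin (n+1))),
      b (Sum.inr 0) = x ∧ b (Sum.inr 1) = Complex.I • x := by
  have hcard : Module.finrank ℝ (EuclideanSpace ℂ (Fin (n+1)))
      = Fintype.card (Fin (2*n) ⊕ Fin 2) := by
    rw [← Module.finrank_mul_finrank ℝ ℂ (EuclideanSpace ℂ (Fin (n+1))),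
      Complex.finrank_real_complex, finrank_euclideanSpace]
    simp
    ring
  set v : (Fin (2*n) ⊕ Fin 2) → EuclideanSpace ℂ (Fin (n+1)) :=
    Sum.elim (fun _ => 0) ![x, Complex.I • x] with hv
  have h0 : v (Sum.inr 0) = x := rfl
  have h1 : v (Sum.inr 1) = Complex.I • x := rfl
  have hinner : (inner ℂ x x : ℂ) = 1 := by
    rw [inner_self_eq_norm_sq_to_K, hx]
    norm_num
  have honv : Orthonormal ℝ ((Set.range Sum.inr).restrict v) := by
    constructor
    · rintro ⟨i, k, rfl⟩
      show ‖v (Sum.inr k)‖ = 1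
      fin_cases k
      · simp only [Fin.zero_eta]; rw [h0]; exact hx
      · simp only [Fin.mk_one]; rw [h1, norm_smul, Complex.norm_I, one_mul]; exact hx
    · rintro ⟨i, k, rfl⟩ ⟨j, l, rfl⟩ hne
      have hkl : k ≠ l := by
        intro h; apply hne; simp [h]
      show (inner ℝ (v (Sum.inr k)) (v (Sum.inr l)) : ℝ) = 0
      fin_cases k <;> fin_cases l <;>
        simp only [Fin.zero_eta, Fin.mk_one] at hkl ⊢
      · exact absurd rfl hkl
      · rw [h0, h1]
        have : (inner ℝ x (Complex.I • x) : ℝ) = Complex.re (inner ℂ x (Complex.I • x) : ℂ) := euclid_real_inner x (Complex.I • x)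
        rw [this, inner_smul_right, hinner]
        simp
      · rw [h1, h0]
        have : (inner ℝ (Complex.I • x) x : ℝ) = Complex.re (inner ℂ (Complex.I • x) x : ℂ) := euclid_real_inner (Complex.I • x) x
        rw [this, inner_smul_left, hinner]
        simp
      · exact absurd rfl hkl
  obtain ⟨b, hb⟩ := honv.exists_orthonormalBasis_extension_of_card_eq hcard
  exact ⟨b, hb _ ⟨0, rfl⟩, hb _ ⟨1, rfl⟩⟩

lemma cone_vol_E (n : ℕ) (δ : ℝ) (hδ0 : 0 < δ) (hδ1 : δ < 1)
    (x : EuclideanSpace ℂ (Fin (n+1))) (hx : ‖x‖ = 1)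
    (Φ : EuclideanSpace ℂ (Fin (n+1)) ≃ₗᵢ[ℝ] EuclideanSpace ℝ (Fin (2*n) ⊕ Fin 2)) :
    volume {v : EuclideanSpace ℝ (Fin (2*n) ⊕ Fin 2) |
        ‖v‖ ≤ 1 ∧ (1-δ)*‖v‖^2 < ‖(inner ℂ x (Φ.symm v) : ℂ)‖^2}
    = ENNReal.ofReal (δ^n) *
        volume (ball (0 : EuclideanSpace ℝ (Fin (2*n) ⊕ Fin 2)) 1) := by
  obtain ⟨b, hb0, hb1⟩ := exists_good_basis n x hx
  set Ψ := Φ.symm.trans b.repr with hΨ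
  have key : ∀ v, (Ψ v (Sum.inr 0))^2 + (Ψ v (Sum.inr 1))^2
      = ‖(inner ℂ x (Φ.symm v) : ℂ)‖^2 := by
    intro v
    have h0 : Ψ v (Sum.inr 0) = (inner ℂ x (Φ.symm v) : ℂ).re := by
      show b.repr (Φ.symm v) (Sum.inr 0) = _
      rw [OrthonormalBasis.repr_apply_apply, hb0, euclid_real_inner]
    have h1 : Ψ v (Sum.inr 1) = (inner ℂ x (Φ.symm v) : ℂ).im := by
      show b.repr (Φ.symm v) (Sum.inr 1) = _
      rw [OrthonormalBasis.repr_apply_apply, hb1, euclid_real_inner, inner_smul_left]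
      simp
    rw [h0, h1, Complex.sq_norm, Complex.normSq_apply]
    ring
  have hcoord : ∀ k, Measurable (fun v : EuclideanSpace ℝ (Fin (2*n) ⊕ Fin 2) => v k) :=
    fun k => (EuclideanSpace.proj (𝕜 := ℝ) k).continuous.measurable
  have hm : MeasurableSet {v : EuclideanSpace ℝ (Fin (2*n) ⊕ Fin 2) |
      ‖v‖ ≤ 1 ∧ (1-δ)*‖v‖^2 < (v (Sum.inr 0))^2 + (v (Sum.inr 1))^2} := by
    apply MeasurableSet.inter
    · exact measurableSet_le measurable_norm measurable_const
    · exact measurableSet_lt (((measurable_norm.pow_const 2).const_mul _))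
        (((hcoord _).pow_const 2).add ((hcoord _).pow_const 2))
  have hset : {v : EuclideanSpace ℝ (Fin (2*n) ⊕ Fin 2) |
      ‖v‖ ≤ 1 ∧ (1-δ)*‖v‖^2 < ‖(inner ℂ x (Φ.symm v) : ℂ)‖^2}
      = Ψ ⁻¹' {v : EuclideanSpace ℝ (Fin (2*n) ⊕ Fin 2) |
      ‖v‖ ≤ 1 ∧ (1-δ)*‖v‖^2 < (v (Sum.inr 0))^2 + (v (Sum.inr 1))^2} := by
    ext v
    simp only [mem_setOf_eq, mem_preimage]
    rw [key v, Ψ.norm_map]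
  rw [hset, Ψ.measurePreserving.measure_preimage hm.nullMeasurableSet,
    cone_vol n δ hδ0 hδ1]

set_option maxHeartbeats 1000000 in
theorem gilbert_varshamov_projective
    (T : ℕ) (hT : 2 ≤ T) (δ : ℝ) (hδ0 : 0 < δ) (hδ1 : δ < 1) :
    ∃ K : ℕ, (δ ^ (T - 1))⁻¹ ≤ (K : ℝ) ∧
      ∃ x : Fin K → EuclideanSpace ℂ (Fin T),
        (∀ i, ‖x i‖ = 1) ∧
        ∀ i j, i ≠ j → δ ≤ 1 - ‖(inner ℂ (x i) (x j) : ℂ)‖ ^ 2 := by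
  classical
  obtain ⟨n, rfl⟩ : ∃ n, T = n + 1 := ⟨T - 1, by omega⟩
  have hn : 1 ≤ n := by omega
  set P : ℕ → Prop := fun k => ∃ x : Fin k → EuclideanSpace ℂ (Fin (n+1)),
    (∀ i, ‖x i‖ = 1) ∧ ∀ i j, i ≠ j → ‖(inner ℂ (x i) (x j) : ℂ)‖^2 ≤ 1 - δ with hP
  -- separation
  have hsq1 : Real.sqrt (1 - δ) < 1 := by
    nlinarith [Real.sq_sqrt (show (0:ℝ) ≤ 1 - δ by linarith), Real.sqrt_nonneg (1-δ)]
  set ε : ℝ := Real.sqrt (2 - 2*Real.sqrt (1-δ)) with hεdef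
  have hε : 0 < ε := Real.sqrt_pos.mpr (by linarith)
  have hsep : ∀ x y : EuclideanSpace ℂ (Fin (n+1)), ‖x‖ = 1 → ‖y‖ = 1 →
      ‖(inner ℂ x y : ℂ)‖^2 ≤ 1 - δ → ε ≤ dist x y := by
    intro x y hx hy hxy
    have h1 : ‖(inner ℂ x y : ℂ)‖ ≤ Real.sqrt (1-δ) :=
      (Real.le_sqrt (norm_nonneg _) (by linarith)).mpr hxy
    have h2 : RCLike.re (inner ℂ x y : ℂ) ≤ Real.sqrt (1-δ) :=
      le_trans (RCLike.re_le_norm _) h1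
    have h3 : ε^2 ≤ ‖x - y‖^2 := by
      rw [norm_sub_sq (𝕜 := ℂ), hx, hy, hεdef, Real.sq_sqrt (by linarith)]
      simp only [one_pow]
      linarith
    rw [dist_eq_norm]
    calc ε = Real.sqrt (ε^2) := by rw [Real.sqrt_sq hε.le]
      _ ≤ Real.sqrt (‖x - y‖^2) := Real.sqrt_le_sqrt h3
      _ = ‖x - y‖ := Real.sqrt_sq (norm_nonneg _)
  -- upper bound on sizes of packings
  obtain ⟨t, htfin, htcov⟩ := (totallyBounded_iff).mp
    (isCompact_sphere (0 : EuclideanSpace ℂ (Fin (n+1))) 1).totallyBounded (ε/2) (by linarith)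
  set B := htfin.toFinset.card with hB
  have hPbound : ∀ k, P k → k ≤ B := by
    intro k hk
    obtain ⟨x, hx1, hx2⟩ := hk
    have hxs : ∀ i, x i ∈ sphere (0 : EuclideanSpace ℂ (Fin (n+1))) 1 := by
      intro i; rw [mem_sphere_zero_iff_norm]; exact hx1 i
    have hchoice : ∀ i : Fin k, ∃ p ∈ t, x i ∈ ball p (ε/2) := by
      intro i
      have := htcov (hxs i)
      simpa using this
    choose c hc1 hc2 using hchoice
    have hcinj : Function.Injective c := by
      intro i j hij
      by_contra hne
      have hd : dist (x i) (x j) < ε := by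
        calc dist (x i) (x j) ≤ dist (x i) (c i) + dist (c j) (x j) := by
              rw [hij]; exact dist_triangle _ _ _
          _ < ε/2 + ε/2 := by
              apply add_lt_add (mem_ball.mp (hc2 i))
              rw [dist_comm]; exact mem_ball.mp (hc2 j)
          _ = ε := by ring
      exact absurd (hsep _ _ (hx1 i) (hx1 j) (hx2 i j hne)) (not_le.mpr hd)
    have : Function.Injective (fun i : Fin k => (⟨c i, htfin.mem_toFinset.mpr (hc1 i)⟩ :
        htfin.toFinset)) := by
      intro i j hij
      exact hcinj (Subtype.mk_eq_mk.mp hij)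
    simpa using Fintype.card_le_of_injective _ this
  have hP1 : P 1 := by
    refine ⟨fun _ => EuclideanSpace.single (0 : Fin (n+1)) (1:ℂ), fun i => ?_, fun i j hij => ?_⟩
    · rw [EuclideanSpace.norm_single]; norm_num
    · exact absurd (Subsingleton.elim i j) hij
  set K := Nat.findGreatest P B with hKdef
  have hB1 : 1 ≤ B := hPbound 1 hP1
  have hPK : P K := Nat.findGreatest_spec hB1 hP1
  have hK1 : 1 ≤ K := Nat.le_findGreatest hB1 hP1
  have hmax : ¬ P (K+1) := by
    intro h
    have := Nat.le_findGreatest (hPbound _ h) h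
    omega
  obtain ⟨x, hx1, hx2⟩ := hPK
  -- maximality: every unit vector is close to some x i
  have hcover : ∀ y : EuclideanSpace ℂ (Fin (n+1)), ‖y‖ = 1 →
      ∃ i, 1 - δ < ‖(inner ℂ (x i) y : ℂ)‖^2 := by
    intro y hy
    by_contra hcon
    push_neg at hcon
    apply hmax
    refine ⟨Fin.snoc x y, ?_, ?_⟩
    · intro i
      refine Fin.lastCases ?_ ?_ i
      · rw [Fin.snoc_last]; exact hy
      · intro j; rw [Fin.snoc_castSucc]; exact hx1 j
    · intro i j hij
      rcases Fin.eq_castSucc_or_eq_last i with ⟨i', rfl⟩ | rfl <;>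
        rcases Fin.eq_castSucc_or_eq_last j with ⟨j', rfl⟩ | rfl
      · rw [Fin.snoc_castSucc, Fin.snoc_castSucc]
        exact hx2 i' j' (fun h => hij (by rw [h]))
      · rw [Fin.snoc_castSucc, Fin.snoc_last]
        exact hcon i'
      · rw [Fin.snoc_last, Fin.snoc_castSucc, norm_inner_symm]
        exact hcon j'
      · exact absurd rfl hij
  -- measure argument
  obtain ⟨b0, -, -⟩ := exists_good_basis n (x ⟨0, by omega⟩) (hx1 _)
  set Φ := b0.repr with hΦ
  set A : Fin K → Set (EuclideanSpace ℝ (Fin (2*n) ⊕ Fin 2)) := fun i =>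
    {v | ‖v‖ ≤ 1 ∧ (1-δ)*‖v‖^2 < ‖(inner ℂ (x i) (Φ.symm v) : ℂ)‖^2} with hA
  have hvol : ∀ i, volume (A i)
      = ENNReal.ofReal (δ^n) * volume (ball (0 : EuclideanSpace ℝ (Fin (2*n) ⊕ Fin 2)) 1) :=
    fun i => cone_vol_E n δ hδ0 hδ1 (x i) (hx1 i) Φ
  have hcov : ball (0 : EuclideanSpace ℝ (Fin (2*n) ⊕ Fin 2)) 1 ⊆
      {0} ∪ ⋃ i, A i := by
    intro v hv
    rcases eq_or_ne v 0 with rfl | hv0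
    · exact Or.inl rfl
    have hvn : 0 < ‖v‖ := norm_pos_iff.mpr hv0
    have hv1 : ‖v‖ < 1 := by rwa [mem_ball, dist_zero_right] at hv
    set y0 := Φ.symm v with hy0
    have hy0n : ‖y0‖ = ‖v‖ := Φ.symm.norm_map v
    set y := (‖v‖⁻¹ : ℝ) • y0 with hy
    have hyn : ‖y‖ = 1 := by
      rw [hy, norm_smul, Real.norm_eq_abs, abs_of_pos (inv_pos.mpr hvn), hy0n,
        inv_mul_cancel₀ hvn.ne']
    obtain ⟨i, hi⟩ := hcover y hyn
    have hsmul : ((‖v‖⁻¹ : ℝ) • y0) = ((‖v‖⁻¹ : ℝ) : ℂ) • y0 :=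
      RCLike.real_smul_eq_coe_smul (K := ℂ) _ _
    have hinner : ‖(inner ℂ (x i) y : ℂ)‖ = ‖v‖⁻¹ * ‖(inner ℂ (x i) y0 : ℂ)‖ := by
      rw [hy, hsmul, inner_smul_right, norm_mul, Complex.norm_real, Real.norm_eq_abs,
        abs_of_pos (inv_pos.mpr hvn)]
    refine Or.inr (mem_iUnion.mpr ⟨i, ?_, ?_⟩)
    · exact hv1.le
    · rw [hinner, mul_pow] at hi
      have hvv : (‖v‖⁻¹)^2 * ‖v‖^2 = 1 := by
        field_simp
      nlinarith [norm_nonneg (inner ℂ (x i) y0 : ℂ), sq_nonneg (‖v‖⁻¹)]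
  -- sum up
  set V := volume (ball (0 : EuclideanSpace ℝ (Fin (2*n) ⊕ Fin 2)) 1) with hV
  have hVpos : V ≠ 0 := (measure_ball_pos _ _ one_pos).ne'
  have hVfin : V ≠ ⊤ := measure_ball_lt_top.ne
  have hatom : NoAtoms (volume : Measure (EuclideanSpace ℝ (Fin (2*n) ⊕ Fin 2))) :=
    MeasureTheory.Measure.IsAddHaarMeasure.nullSingletonClass _
  have hmain : V ≤ (K : ℝ≥0∞) * (ENNReal.ofReal (δ^n) * V) := by
    calc V ≤ volume ({0} ∪ ⋃ i, A i) := measure_mono hcov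
      _ ≤ volume ({0} : Set (EuclideanSpace ℝ (Fin (2*n) ⊕ Fin 2))) + volume (⋃ i, A i) :=
          measure_union_le _ _
      _ = volume (⋃ i, A i) := by rw [measure_singleton, zero_add]
      _ ≤ ∑' i : Fin K, volume (A i) := measure_iUnion_le _
      _ = (K : ℝ≥0∞) * (ENNReal.ofReal (δ^n) * V) := by
          rw [tsum_fintype]
          simp only [hvol]
          rw [Finset.sum_const, Finset.card_univ, Fintype.card_fin, nsmul_eq_mul]
  have hKδ : (1 : ℝ≥0∞) ≤ (K : ℝ≥0∞) * ENNReal.ofReal (δ^n) := by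
    rw [← ENNReal.mul_le_mul_iff_left hVpos hVfin, one_mul]
    calc V ≤ (K : ℝ≥0∞) * (ENNReal.ofReal (δ^n) * V) := hmain
      _ = (K : ℝ≥0∞) * ENNReal.ofReal (δ^n) * V := (mul_assoc _ _ _).symm
  have hreal : 1 ≤ (K : ℝ) * δ^n := by
    rw [← ENNReal.one_le_ofReal (p := (K : ℝ) * δ^n)]
    rwa [ENNReal.ofReal_mul (by positivity), ENNReal.ofReal_natCast]
  refine ⟨K, ?_, x, hx1, fun i j hij => by linarith [hx2 i j hij]⟩
  have hδn : (0:ℝ) < δ^n := pow_pos hδ0 n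
  have : (δ ^ (n + 1 - 1))⁻¹ = (δ^n)⁻¹ := by norm_num
  rw [this]
  calc (δ^n)⁻¹ = 1 * (δ^n)⁻¹ := (one_mul _).symm
    _ ≤ ((K : ℝ) * δ^n) * (δ^n)⁻¹ := by
        apply mul_le_mul_of_nonneg_right hreal (inv_nonneg.mpr hδn.le)
    _ = K := by field_simp
end
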